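/- Let f : F_p^2 → ℚ be equidistributed in all directions except possibly d_1, ..., d_k (k ≥ 1), and assume the total sum of f is such that f is not equidistributed in d_1,...,d_k. Then f can be written as a finite rational linear combination of indicator functions of lines, each line having one of the directions d_1, ..., d_k. -/

import Mathlib

/-- Sum of `f` over the line through `x` with direction vector `u`. -/
def lineSum (p : ℕ) [Fact p.Prime] (f : ZMod p × ZMod p → ℚ)
    (u x : ZMod p × ZMod p) : ℚ :=
  ∑ t : ZMod p, f (x + t • u)

/-- Direction vectors of the `p+1` directions: `some m` has slope `m`, `none` is vertical. -/
def dirVec (p : ℕ) : Option (ZMod p) → ZMod p × ZMod p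
  | none => (0, 1)
  | some m => (1, m)

/-- `f` is equidistributed in the direction of the vector `u`. -/
def FEquidistributed (p : ℕ) [Fact p.Prime] (f : ZMod p × ZMod p → ℚ)
    (u : ZMod p × ZMod p) : Prop :=
  ∀ x y : ZMod p × ZMod p, lineSum p f u x = lineSum p f u y

/-- Indicator of the line of direction `d` and intercept `b`:
for `d = some m` the line `y = m x + b`, for `d = none` the vertical line `x = b`. -/
def lineInd (p : ℕ) : Option (ZMod p) → ZMod p → ZMod p × ZMod p → ℚ
  | some m, b, w => if w.2 = m * w.1 + b then 1 else 0
  | none, b, w => if w.1 = b then 1 else 0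

/-- Sum of `f` over the line of direction `d` with intercept `b`. -/
def iSum (p : ℕ) [Fact p.Prime] (f : ZMod p × ZMod p → ℚ) :
    Option (ZMod p) → ZMod p → ℚ
  | some m, b => ∑ x : ZMod p, f (x, m * x + b)
  | none, b => ∑ y : ZMod p, f (b, y)

lemma lineSum_eq_iSum (p : ℕ) [Fact p.Prime] (f : ZMod p × ZMod p → ℚ)
    (d : Option (ZMod p)) (w : ZMod p × ZMod p) :
    lineSum p f (dirVec p d) w = ∑ b : ZMod p, iSum p f d b * lineInd p d b w := by
  cases d with
  | none =>
    have h : ∀ b : ZMod p, iSum p f none b * lineInd p none b w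
        = if b = w.1 then iSum p f none b else 0 := by
      intro b
      simp only [lineInd]
      rw [mul_ite, mul_one, mul_zero,
        if_congr (Iff.intro (fun h => h.symm) (fun h => h.symm)) rfl rfl]
    rw [Finset.sum_congr rfl (fun b _ => h b), Finset.sum_ite_eq' Finset.univ w.1]
    simp only [Finset.mem_univ, if_true, iSum, lineSum, dirVec]
    apply Fintype.sum_equiv (Equiv.addLeft w.2)
    intro t
    congr 1
    simp [Prod.ext_iff, Equiv.addLeft, smul_eq_mul]
  | some m =>
    have h : ∀ b : ZMod p, iSum p f (some m) b * lineInd p (some m) b w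
        = if b = w.2 - m * w.1 then iSum p f (some m) b else 0 := by
      intro b
      simp only [lineInd]
      have hiff : (w.2 = m * w.1 + b) ↔ (b = w.2 - m * w.1) := by
        constructor <;> intro h <;> linear_combination -h
      rw [mul_ite, mul_one, mul_zero, if_congr hiff rfl rfl]
    rw [Finset.sum_congr rfl (fun b _ => h b), Finset.sum_ite_eq' Finset.univ (w.2 - m * w.1)]
    simp only [Finset.mem_univ, if_true, iSum, lineSum, dirVec]
    apply Fintype.sum_equiv (Equiv.addLeft w.1)
    intro t
    congr 1
    simp only [Prod.ext_iff, Equiv.addLeft, Prod.fst_add, Prod.snd_add, Prod.smul_mk,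
      smul_eq_mul, mul_one, Equiv.coe_fn_mk]
    constructor
    · rfl
    · show w.2 + t * m = m * (w.1 + t) + (w.2 - m * w.1)
      ring

lemma sum_lineInd (p : ℕ) [Fact p.Prime] (d : Option (ZMod p)) (w : ZMod p × ZMod p) :
    ∑ b : ZMod p, lineInd p d b w = 1 := by
  cases d with
  | none =>
    have h : ∀ b : ZMod p, lineInd p none b w = if b = w.1 then (1 : ℚ) else 0 := by
      intro b
      simp only [lineInd]
      exact if_congr (Iff.intro (fun h => h.symm) (fun h => h.symm)) rfl rfl
    rw [Finset.sum_congr rfl (fun b _ => h b), Finset.sum_ite_eq' Finset.univ w.1]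
    simp
  | some m =>
    have h : ∀ b : ZMod p, lineInd p (some m) b w
        = if b = w.2 - m * w.1 then (1 : ℚ) else 0 := by
      intro b
      simp only [lineInd]
      refine if_congr ?_ rfl rfl
      constructor <;> intro h <;> linear_combination -h
    rw [Finset.sum_congr rfl (fun b _ => h b),
      Finset.sum_ite_eq' Finset.univ (w.2 - m * w.1)]
    simp

lemma shift_sum (p : ℕ) [Fact p.Prime] (f : ZMod p × ZMod p → ℚ) (a : ZMod p × ZMod p) :
    ∑ v : ZMod p × ZMod p, f (a + v) = ∑ v : ZMod p × ZMod p, f v := by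
  apply Fintype.sum_equiv (Equiv.addLeft a)
  intro v; rfl

/-- The key identity: summing the line sums through `w` over all `p+1` directions
counts `f w` with multiplicity `p` plus the total sum. -/
lemma sum_all_directions (p : ℕ) [Fact p.Prime] (f : ZMod p × ZMod p → ℚ)
    (w : ZMod p × ZMod p) :
    ∑ d : Option (ZMod p), lineSum p f (dirVec p d) w
      = p * f w + ∑ v : ZMod p × ZMod p, f v := by
  have h1 : ∀ d : Option (ZMod p), lineSum p f (dirVec p d) w
      = f w + ∑ t ∈ Finset.univ.erase (0 : ZMod p), f (w + t • dirVec p d) := by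
    intro d
    rw [lineSum, ← Finset.add_sum_erase _ _ (Finset.mem_univ (0 : ZMod p))]
    simp
  calc ∑ d : Option (ZMod p), lineSum p f (dirVec p d) w
      = ∑ d : Option (ZMod p), (f w + ∑ t ∈ Finset.univ.erase (0 : ZMod p),
          f (w + t • dirVec p d)) := Finset.sum_congr rfl (fun d _ => h1 d)
    _ = (p + 1 : ℚ) * f w + ∑ d : Option (ZMod p), ∑ t ∈ Finset.univ.erase (0 : ZMod p),
          f (w + t • dirVec p d) := by
        rw [Finset.sum_add_distrib, Finset.sum_const]
        congr 1
        simp [Fintype.card_option, ZMod.card]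
    _ = (p + 1 : ℚ) * f w + ∑ v ∈ Finset.univ.erase (0 : ZMod p × ZMod p), f (w + v) := by
        congr 1
        rw [← Finset.sum_product']
        refine Finset.sum_nbij' (i := fun x => x.2 • dirVec p x.1)
          (j := fun v => (if v.1 = 0 then none else some (v.2 * v.1⁻¹),
            if v.1 = 0 then v.2 else v.1)) ?_ ?_ ?_ ?_ ?_
        · rintro ⟨d, t⟩ ha
          simp only [Finset.mem_product, Finset.mem_erase, Finset.mem_univ, and_true,
            true_and] at ha ⊢
          cases d <;> simp [dirVec, Prod.ext_iff, smul_eq_mul] <;> tauto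
        · rintro v hv
          simp only [Finset.mem_erase, Finset.mem_univ, and_true] at hv
          simp only [Finset.mem_product, Finset.mem_erase, Finset.mem_univ, and_true, true_and]
          by_cases h : v.1 = 0
          · simp only [h, if_true]
            intro h2
            exact hv (Prod.ext h h2)
          · simp [h]
        · rintro ⟨d, t⟩ ha
          simp only [Finset.mem_product, Finset.mem_erase, Finset.mem_univ, and_true,
            true_and] at ha
          cases d with
          | none => simp [dirVec, smul_eq_mul, ha]
          | some m =>
            simp only [dirVec, Prod.smul_mk, smul_eq_mul, mul_one]
            simp only [ha, if_false, Prod.mk.injEq, Option.some.injEq]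
            constructor
            · rw [mul_comm t m, mul_assoc, mul_inv_cancel₀ ha, mul_one]
            · trivial
        · rintro v hv
          simp only [Finset.mem_erase, Finset.mem_univ, and_true] at hv
          by_cases h : v.1 = 0
          · simp only [h, if_true, dirVec, Prod.smul_mk, smul_eq_mul, mul_zero, mul_one]
            exact Prod.ext h.symm rfl
          · simp only [h, if_false, dirVec, Prod.smul_mk, smul_eq_mul, mul_one]
            refine Prod.ext rfl ?_
            show v.1 * (v.2 * v.1⁻¹) = v.2
            field_simp
        · rintro ⟨d, t⟩ _
          rfl
    _ = (p + 1 : ℚ) * f w + ((∑ v : ZMod p × ZMod p, f (w + v)) - f (w + 0)) := by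
        rw [Finset.sum_erase_eq_sub (Finset.mem_univ _)]
    _ = p * f w + ∑ v : ZMod p × ZMod p, f v := by
        rw [shift_sum]
        simp only [add_zero]
        ring

lemma lineSum_const (p : ℕ) [Fact p.Prime] (f : ZMod p × ZMod p → ℚ)
    (u : ZMod p × ZMod p) (h : FEquidistributed p f u) (w : ZMod p × ZMod p) :
    lineSum p f u w = (∑ v : ZMod p × ZMod p, f v) / p := by
  have hp : (p : ℚ) ≠ 0 := Nat.cast_ne_zero.mpr (Fact.out : p.Prime).ne_zero
  have htot : ∑ x : ZMod p × ZMod p, lineSum p f u x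
      = p * ∑ v : ZMod p × ZMod p, f v := by
    simp only [lineSum]
    rw [Finset.sum_comm]
    have key : ∀ t : ZMod p, ∑ x : ZMod p × ZMod p, f (x + t • u)
        = ∑ v : ZMod p × ZMod p, f v := by
      intro t
      apply Fintype.sum_equiv (Equiv.addRight (t • u))
      intro v; rfl
    rw [Finset.sum_congr rfl (fun t _ => key t), Finset.sum_const]
    simp [ZMod.card]
  have hconst : ∑ x : ZMod p × ZMod p, lineSum p f u x
      = ((p : ℚ) * p) * lineSum p f u w := by
    rw [Finset.sum_congr rfl (fun x _ => h x w), Finset.sum_const]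
    simp [ZMod.card]
  rw [hconst] at htot
  have h2 : (p : ℚ) * lineSum p f u w = ∑ v : ZMod p × ZMod p, f v :=
    mul_left_cancel₀ hp (by linear_combination htot)
  rw [eq_div_iff hp]
  linarith

theorem stmt_12 (p : ℕ) [Fact p.Prime] (f : ZMod p × ZMod p → ℚ)
    (D : Finset (Option (ZMod p))) (hD : D.Nonempty)
    (h1 : ∀ d ∉ D, FEquidistributed p f (dirVec p d))
    (h2 : ∀ d ∈ D, ¬ FEquidistributed p f (dirVec p d)) :
    ∃ c : Option (ZMod p) → ZMod p → ℚ,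
      f = fun w => ∑ d ∈ D, ∑ b : ZMod p, c d b * lineInd p d b w := by
  classical
  obtain ⟨d0, hd0⟩ := hD
  have hp : (p : ℚ) ≠ 0 := Nat.cast_ne_zero.mpr (Fact.out : p.Prime).ne_zero
  set T : ℚ := ∑ v : ZMod p × ZMod p, f v with hT
  set C : ℚ := ((Dᶜ.card : ℚ) * (T / p) - T) / p with hC
  refine ⟨fun d b => (1 / p) * iSum p f d b + (if d = d0 then C else 0), ?_⟩
  funext w
  have hcompl : ∑ d ∈ Dᶜ, lineSum p f (dirVec p d) w = (Dᶜ.card : ℚ) * (T / p) := by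
    rw [Finset.sum_congr rfl (fun d hd =>
      lineSum_const p f (dirVec p d) (h1 d (Finset.mem_compl.mp hd)) w), Finset.sum_const]
    simp [mul_comm, hT]
  have hkey : ∑ d ∈ D, lineSum p f (dirVec p d) w
      + (Dᶜ.card : ℚ) * (T / p) = p * f w + T := by
    rw [← hcompl, Finset.sum_add_sum_compl]
    exact sum_all_directions p f w
  have expand : ∑ d ∈ D, ∑ b : ZMod p,
      ((1 / p) * iSum p f d b + (if d = d0 then C else 0)) * lineInd p d b w
      = (1 / p) * ∑ d ∈ D, lineSum p f (dirVec p d) w + C := by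
    have step : ∀ d ∈ D, ∑ b : ZMod p,
        ((1 / p) * iSum p f d b + (if d = d0 then C else 0)) * lineInd p d b w
        = (1 / p) * lineSum p f (dirVec p d) w + (if d = d0 then C else 0) := by
      intro d _
      have hsplit : ∀ b : ZMod p,
          ((1 / p) * iSum p f d b + (if d = d0 then C else 0)) * lineInd p d b w
          = (1 / p) * (iSum p f d b * lineInd p d b w)
            + (if d = d0 then C else 0) * lineInd p d b w := by
        intro b; ring
      rw [Finset.sum_congr rfl (fun b _ => hsplit b), Finset.sum_add_distrib,
        ← Finset.mul_sum, ← Finset.mul_sum, ← lineSum_eq_iSum, sum_lineInd, mul_one]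
    rw [Finset.sum_congr rfl step, Finset.sum_add_distrib, ← Finset.mul_sum]
    congr 1
    rw [Finset.sum_ite_eq' D d0, if_pos hd0]
  rw [expand]
  have hfw : f w = (1 / p) * (p * f w + T - (Dᶜ.card : ℚ) * (T / p)) + C := by
    rw [hC]; field_simp; ring
  rw [hfw]
  congr 2
  linarith [hkey]
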